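/- Let G be a group with finite generating set S, Σ = S ∪ S⁻¹, and fix D ≥ 0. The collection of D-contracting cone types is finite: the set { Cone^D(u) : u is a geodesic word over Σ } is a finite set of subsets of Σ*. -/

import Mathlib

/-! Words over the alphabet `Σ = S ∪ S⁻¹` in a group `G` with finite generating
set `S`, word length, geodesic words, and `D`-contracting geodesic words. -/

section Defs

variable {G : Type*} [Group G]

/-- `g` is a letter of the alphabet `Σ = S ∪ S⁻¹`. -/
def IsLetter (S : Finset G) (g : G) : Prop := g ∈ S ∨ g⁻¹ ∈ S

/-- The word length `|g|`: the minimum length of a list over `Σ = S ∪ S⁻¹`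
whose product is `g`. -/
noncomputable def wordLength (S : Finset G) (g : G) : ℕ :=
  sInf {n | ∃ l : List G, (∀ x ∈ l, IsLetter S x) ∧ l.prod = g ∧ l.length = n}

/-- The word metric `d(g,h) = |g⁻¹h|`. -/
noncomputable def wordDist (S : Finset G) (g h : G) : ℕ := wordLength S (g⁻¹ * h)

/-- A word (list of letters of `Σ`) is geodesic if the word length of its
product equals its length. -/
def IsGeodesicWord (S : Finset G) (w : List G) : Prop :=
  (∀ x ∈ w, IsLetter S x) ∧ wordLength S w.prod = w.length

/-- `P_{i,j}(w)`: the vertices `a₁⋯a_k` for `i ≤ k ≤ j` of the subsegment of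
the path of prefix products of `w`. -/
def segVerts (w : List G) (i j : ℕ) : Set G :=
  {g | ∃ k, i ≤ k ∧ k ≤ j ∧ (w.take k).prod = g}

/-- The closed ball of radius `r` about `g₀` in the word metric. -/
def wordBall (S : Finset G) (g₀ : G) (r : ℕ) : Set G :=
  {h | wordDist S g₀ h ≤ r}

/-- The projection `π_P(x)` of a point `x` to a subset `P` of `G`:
the points of `P` at minimal word-metric distance from `x`. -/
def projPt (S : Finset G) (P : Set G) (x : G) : Set G :=
  {p ∈ P | ∀ q ∈ P, wordDist S x p ≤ wordDist S x q}

/-- The projection `π_P(B) = ⋃_{x ∈ B} π_P(x)` of a set `B` to `P`. -/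
def projSet (S : Finset G) (P B : Set G) : Set G :=
  ⋃ x ∈ B, projPt S P x

/-- A word `w` over `Σ` is a `D`-contracting geodesic word if it is geodesic
and, for every `0 ≤ i ≤ j ≤ |w|` and every ball `B` (in the word metric)
disjoint from `P_{i,j}(w)`, the diameter of `π_{P_{i,j}(w)}(B)` in the word
metric is at most `D`. -/
def IsContractingWord (S : Finset G) (D : ℝ) (w : List G) : Prop :=
  IsGeodesicWord S w ∧
    ∀ i j : ℕ, i ≤ j → j ≤ w.length → ∀ g₀ : G, ∀ r : ℕ,
      Disjoint (wordBall S g₀ r) (segVerts w i j) →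
        ∀ p ∈ projSet S (segVerts w i j) (wordBall S g₀ r),
          ∀ q ∈ projSet S (segVerts w i j) (wordBall S g₀ r),
            (wordDist S p q : ℝ) ≤ D

end Defs

/-- The `D`-contracting cone of a word `u`: all words `w` over `Σ` such that
the concatenation `uw` is a `D`-contracting geodesic word. -/
def cone {G : Type*} [Group G] (S : Finset G) (D : ℝ) (u : List G) : Set (List G) :=
  {w | (∀ x ∈ w, IsLetter S x) ∧ IsContractingWord S D (u ++ w)}

section Basics

variable {G : Type*} [Group G] {S : Finset G}

lemma IsLetter.inv {g : G} (h : IsLetter S g) : IsLetter S g⁻¹ := by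
  rcases h with h | h
  · exact Or.inr (by simpa)
  · exact Or.inl h

/-- Existence of a representing word over the alphabet. -/
lemma exists_letter_list (hS : Subgroup.closure (S : Set G) = ⊤) (g : G) :
    ∃ l : List G, (∀ x ∈ l, IsLetter S x) ∧ l.prod = g := by
  have hg : g ∈ Subgroup.closure (S : Set G) := by rw [hS]; trivial
  induction hg using Subgroup.closure_induction with
  | mem x hx => exact ⟨[x], by intro y hy; simp at hy; subst hy; exact Or.inl hx, by simp⟩
  | one => exact ⟨[], by simp, by simp⟩
  | mul x y _ _ hx hy =>
      obtain ⟨l1, hl1, hp1⟩ := hx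
      obtain ⟨l2, hl2, hp2⟩ := hy
      refine ⟨l1 ++ l2, ?_, by simp [hp1, hp2]⟩
      intro z hz
      rcases List.mem_append.1 hz with h | h
      exacts [hl1 z h, hl2 z h]
  | inv x _ hx =>
      obtain ⟨l, hl, hp⟩ := hx
      refine ⟨(l.map Inv.inv).reverse, ?_, ?_⟩
      · intro z hz
        simp only [List.mem_reverse, List.mem_map] at hz
        obtain ⟨y, hy, rfl⟩ := hz
        exact (hl y hy).inv
      · rw [List.prod_reverse_noncomm]; simp [hp]

lemma wordLength_set_nonempty (hS : Subgroup.closure (S : Set G) = ⊤) (g : G) :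
    {n | ∃ l : List G, (∀ x ∈ l, IsLetter S x) ∧ l.prod = g ∧ l.length = n}.Nonempty := by
  obtain ⟨l, hl, hp⟩ := exists_letter_list hS g
  exact ⟨l.length, l, hl, hp, rfl⟩

lemma wordLength_le {g : G} {l : List G} (hl : ∀ x ∈ l, IsLetter S x) (hp : l.prod = g) :
    wordLength S g ≤ l.length :=
  Nat.sInf_le ⟨l, hl, hp, rfl⟩

lemma exists_geodesic_list (hS : Subgroup.closure (S : Set G) = ⊤) (g : G) :
    ∃ l : List G, (∀ x ∈ l, IsLetter S x) ∧ l.prod = g ∧ l.length = wordLength S g :=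
  Nat.sInf_mem (wordLength_set_nonempty hS g)

lemma wordLength_one : wordLength (G := G) S 1 = 0 :=
  Nat.le_zero.1 (wordLength_le (l := []) (by simp) (by simp))

lemma wordLength_eq_zero (hS : Subgroup.closure (S : Set G) = ⊤) {g : G}
    (h : wordLength S g = 0) : g = 1 := by
  obtain ⟨l, _, hp, hlen⟩ := exists_geodesic_list hS g
  rw [h] at hlen
  rw [← hp, List.length_eq_zero_iff.1 hlen]; simp

end Basics
section Basics2

variable {G : Type*} [Group G] {S : Finset G}

variable (hS : Subgroup.closure (S : Set G) = ⊤)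
include hS in
lemma wordLength_mul_le (g h : G) :
    wordLength S (g * h) ≤ wordLength S g + wordLength S h := by
  obtain ⟨l1, hl1, hp1, hn1⟩ := exists_geodesic_list hS g
  obtain ⟨l2, hl2, hp2, hn2⟩ := exists_geodesic_list hS h
  calc wordLength S (g * h) ≤ (l1 ++ l2).length := wordLength_le
        (by intro x hx; rcases List.mem_append.1 hx with h' | h'; exacts [hl1 x h', hl2 x h'])
        (by simp [hp1, hp2])
    _ = _ := by simp [hn1, hn2]

include hS in
lemma wordLength_inv (g : G) : wordLength S g⁻¹ = wordLength S g := by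
  have key : ∀ x : G, wordLength S x⁻¹ ≤ wordLength S x := by
    intro x
    obtain ⟨l, hl, hp, hn⟩ := exists_geodesic_list hS x
    calc wordLength S x⁻¹ ≤ ((l.map Inv.inv).reverse).length := wordLength_le
          (by intro z hz; simp only [List.mem_reverse, List.mem_map] at hz;
              obtain ⟨y, hy, rfl⟩ := hz; exact (hl y hy).inv)
          (by rw [List.prod_reverse_noncomm]; simp [hp])
      _ = _ := by simp [hn]
  refine le_antisymm (key g) ?_
  simpa using key g⁻¹

lemma wordDist_self (g : G) : wordDist S g g = 0 := by
  simp [wordDist, wordLength_one]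

include hS in
lemma wordDist_comm (g h : G) : wordDist S g h = wordDist S h g := by
  unfold wordDist
  rw [← wordLength_inv hS]
  congr 1; group

include hS in
lemma wordDist_triangle (g h k : G) : wordDist S g k ≤ wordDist S g h + wordDist S h k := by
  unfold wordDist
  calc wordLength S (g⁻¹ * k) = wordLength S ((g⁻¹ * h) * (h⁻¹ * k)) := by group
    _ ≤ _ := wordLength_mul_le hS _ _

include hS in
lemma wordDist_eq_zero {g h : G} (hd : wordDist S g h = 0) : g = h := by
  have := wordLength_eq_zero hS hd
  have : g * (g⁻¹ * h) = g * 1 := by rw [this]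
  simpa using this.symm

lemma wordDist_mul_left (a g h : G) : wordDist S (a * g) (a * h) = wordDist S g h := by
  unfold wordDist
  congr 1; group

lemma wordLength_letter {g : G} (h : IsLetter S g) : wordLength S g ≤ 1 := by
  calc wordLength S g ≤ ([g] : List G).length := wordLength_le (by simpa) (by simp)
    _ = 1 := rfl

end Basics2
section Geodesics

variable {G : Type*} [Group G] {S : Finset G}

/-- The `k`-th vertex of the path of prefix products. -/
def verts (w : List G) (k : ℕ) : G := (w.take k).prod

lemma verts_zero (w : List G) : verts w 0 = 1 := by simp [verts]

lemma verts_of_length_le (w : List G) {k : ℕ} (h : w.length ≤ k) : verts w k = w.prod := by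
  simp [verts, List.take_of_length_le h]

lemma segVerts_eq_image (w : List G) (i j : ℕ) :
    segVerts w i j = verts w '' Set.Icc i j := by
  ext g
  constructor
  · rintro ⟨k, h1, h2, rfl⟩; exact ⟨k, ⟨h1, h2⟩, rfl⟩
  · rintro ⟨k, ⟨h1, h2⟩, rfl⟩; exact ⟨k, h1, h2, rfl⟩

lemma segVerts_nonempty (w : List G) {i j : ℕ} (h : i ≤ j) : (segVerts w i j).Nonempty :=
  ⟨verts w i, i, le_refl i, h, rfl⟩

lemma segVerts_append_left (u w : List G) {i j : ℕ} (h : j ≤ u.length) :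
    segVerts (u ++ w) i j = segVerts u i j := by
  unfold segVerts
  ext g
  constructor
  · rintro ⟨k, h1, h2, rfl⟩
    exact ⟨k, h1, h2, by rw [List.take_append_of_le_length (h2.trans h)]⟩
  · rintro ⟨k, h1, h2, rfl⟩
    exact ⟨k, h1, h2, by rw [List.take_append_of_le_length (h2.trans h)]⟩

variable (hS : Subgroup.closure (S : Set G) = ⊤)

include hS in
/-- Key property of geodesic words : distance between vertices equals index gap. -/
lemma geo_dist (hw : IsGeodesicWord S w) {s t : ℕ} (hst : s ≤ t) (ht : t ≤ w.length) :
    wordDist S (verts w s) (verts w t) = t - s := by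
  obtain ⟨hlet, hlen⟩ := hw
  set mid := (w.take t).drop s with hmid
  have htt : w.take t = w.take s ++ mid := by
    conv_lhs => rw [← List.take_append_drop s (w.take t)]
    rw [List.take_take, min_eq_left hst]
  have hmidlen : mid.length = t - s := by
    simp [hmid, List.length_drop, List.length_take]
    omega
  have hmidmem : ∀ x ∈ mid, IsLetter S x := by
    intro x hx
    exact hlet x (List.mem_of_mem_take (List.mem_of_mem_drop hx))
  have hprod : mid.prod = (verts w s)⁻¹ * verts w t := by
    have : (w.take t).prod = (w.take s).prod * mid.prod := by rw [htt]; simp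
    unfold verts
    rw [this]; group
  have hle : wordDist S (verts w s) (verts w t) ≤ t - s := by
    unfold wordDist
    calc wordLength S ((verts w s)⁻¹ * verts w t) ≤ mid.length :=
          wordLength_le hmidmem hprod
      _ = t - s := hmidlen
  refine le_antisymm hle ?_
  by_contra hlt
  push_neg at hlt
  obtain ⟨l, hl1, hl2, hl3⟩ := exists_geodesic_list hS ((verts w s)⁻¹ * verts w t)
  have hwsplit : w = w.take s ++ mid ++ w.drop t := by
    rw [← htt, List.take_append_drop]
  set w' := w.take s ++ l ++ w.drop t with hw'
  have hW1 : ∀ x ∈ w', IsLetter S x := by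
    intro x hx
    rcases List.mem_append.1 hx with hx | hx
    · rcases List.mem_append.1 hx with hx | hx
      · exact hlet x (List.mem_of_mem_take hx)
      · exact hl1 x hx
    · exact hlet x (List.mem_of_mem_drop hx)
  have hW2 : w'.prod = w.prod := by
    conv_rhs => rw [hwsplit]
    simp [hw', hprod, hl2]
  have : wordLength S w.prod ≤ w'.length := wordLength_le hW1 (by rw [hW2])
  rw [hlen] at this
  have hlw : w'.length = s + l.length + (w.length - t) := by
    simp [hw', List.length_take, List.length_drop]
    omega
  have : wordLength S ((verts w s)⁻¹ * verts w t) < t - s := hlt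
  omega

include hS in
lemma geo_wordLength_verts (hw : IsGeodesicWord S w) {t : ℕ} (ht : t ≤ w.length) :
    wordLength S (verts w t) = t := by
  have := geo_dist hS hw (Nat.zero_le t) ht
  rw [verts_zero] at this
  simpa [wordDist] using this

include hS in
lemma geo_prefix {u w : List G} (h : IsGeodesicWord S (u ++ w)) : IsGeodesicWord S u := by
  obtain ⟨hlet, hlen⟩ := h
  constructor
  · intro x hx; exact hlet x (List.mem_append.2 (Or.inl hx))
  · have := geo_wordLength_verts hS ⟨hlet, hlen⟩ (t := u.length) (by simp)
    rwa [verts, List.take_append_of_le_length (le_refl _), List.take_length] at this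

end Geodesics
section Projections

variable {G : Type*} [Group G] {S : Finset G}

/-- Distance from a point to a set. -/
noncomputable def setDist (S : Finset G) (x : G) (P : Set G) : ℕ :=
  sInf (wordDist S x '' P)

lemma setDist_le {x p : G} {P : Set G} (hp : p ∈ P) : setDist S x P ≤ wordDist S x p :=
  Nat.sInf_le ⟨p, hp, rfl⟩

lemma exists_projPt {x : G} {P : Set G} (hP : P.Nonempty) :
    ∃ p, p ∈ projPt S P x ∧ wordDist S x p = setDist S x P := by
  obtain ⟨p, hp, hd⟩ := Nat.sInf_mem (hP.image (wordDist S x))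
  refine ⟨p, ⟨hp, fun q hq => ?_⟩, hd⟩
  rw [hd]; exact setDist_le hq

lemma projPt_dist {x p : G} {P : Set G} (hp : p ∈ projPt S P x) :
    wordDist S x p = setDist S x P := by
  refine le_antisymm ?_ (setDist_le hp.1)
  obtain ⟨q, hq, hd⟩ := exists_projPt (S := S) (x := x) ⟨p, hp.1⟩
  rw [← hd]; exact hp.2 q hq.1

lemma projPt_mono {x p : G} {P P' : Set G} (hsub : P' ⊆ P)
    (hp : p ∈ projPt S P x) (hp' : p ∈ P') : p ∈ projPt S P' x :=
  ⟨hp', fun q hq => hp.2 q (hsub hq)⟩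

lemma setDist_ball_pos {g₀ x : G} {r : ℕ} {P : Set G}
    (hdisj : Disjoint (wordBall S g₀ r) P) (hx : x ∈ wordBall S g₀ r) {p : G} (hp : p ∈ P) :
    1 ≤ wordDist S g₀ p := by
  rcases Nat.eq_zero_or_pos (wordDist S g₀ p) with h | h
  · exfalso
    have hpball : p ∈ wordBall S g₀ r := by simp [wordBall, h]
    exact Set.disjoint_left.1 hdisj hpball hp
  · exact h

/-- Contraction property of a set, with natural-number constant. -/
def ContrN (S : Finset G) (Dn : ℕ) (P : Set G) : Prop :=
  ∀ g₀ : G, ∀ r : ℕ, Disjoint (wordBall S g₀ r) P →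
    ∀ x ∈ wordBall S g₀ r, ∀ y ∈ wordBall S g₀ r,
      ∀ p ∈ projPt S P x, ∀ q ∈ projPt S P y, wordDist S p q ≤ Dn

lemma isContractingWord_iff {D : ℝ} (hD : 0 ≤ D) (w : List G) :
    IsContractingWord S D w ↔ IsGeodesicWord S w ∧
      ∀ i j : ℕ, i ≤ j → j ≤ w.length → ContrN S ⌊D⌋₊ (segVerts w i j) := by
  unfold IsContractingWord ContrN
  refine and_congr_right fun _ => ?_
  refine forall₂_congr fun i j => ?_
  refine imp_congr_right fun _ => imp_congr_right fun _ => ?_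
  constructor
  · intro h g₀ r hdisj x hx y hy p hp q hq
    have := h g₀ r hdisj p (Set.mem_biUnion hx hp) q (Set.mem_biUnion hy hq)
    exact (Nat.le_floor (by exact_mod_cast this))
  · intro h g₀ r hdisj p hp q hq
    obtain ⟨x, hx, hpx⟩ := Set.mem_iUnion₂.1 hp
    obtain ⟨y, hy, hqy⟩ := Set.mem_iUnion₂.1 hq
    have := h g₀ r hdisj x hx y hy p hpx q hqy
    calc (wordDist S p q : ℝ) ≤ (⌊D⌋₊ : ℝ) := by exact_mod_cast this
      _ ≤ D := Nat.floor_le hD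

lemma wordBall_smul (a g₀ : G) (r : ℕ) :
    wordBall S (a * g₀) r = (fun h => a * h) '' wordBall S g₀ r := by
  ext h
  constructor
  · intro hh
    refine ⟨a⁻¹ * h, ?_, by group⟩
    have : wordDist S g₀ (a⁻¹ * h) = wordDist S (a * g₀) h := by
      rw [← wordDist_mul_left (S := S) a]; congr 1; group
    simpa [wordBall, this] using hh
  · rintro ⟨h₀, hh₀, rfl⟩
    simpa [wordBall, wordDist_mul_left] using hh₀

lemma projPt_smul (a x : G) (P : Set G) :
    projPt S ((fun h => a * h) '' P) (a * x) = (fun h => a * h) '' projPt S P x := by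
  ext p
  constructor
  · rintro ⟨⟨p₀, hp₀, rfl⟩, hmin⟩
    refine ⟨p₀, ⟨hp₀, fun q hq => ?_⟩, rfl⟩
    have := hmin (a * q) ⟨q, hq, rfl⟩
    simpa [wordDist_mul_left] using this
  · rintro ⟨p₀, ⟨hp₀, hmin⟩, rfl⟩
    refine ⟨⟨p₀, hp₀, rfl⟩, ?_⟩
    rintro q ⟨q₀, hq₀, rfl⟩
    simpa [wordDist_mul_left] using hmin q₀ hq₀

lemma ContrN_smul {Dn : ℕ} {P : Set G} (a : G) (h : ContrN S Dn P) :
    ContrN S Dn ((fun h => a * h) '' P) := by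
  intro g₀ r hdisj x hx y hy p hp q hq
  have hg₀ : g₀ = a * (a⁻¹ * g₀) := by group
  have hball : wordBall S g₀ r = (fun h => a * h) '' wordBall S (a⁻¹ * g₀) r := by
    rw [← wordBall_smul, ← hg₀]
  have hdisj' : Disjoint (wordBall S (a⁻¹ * g₀) r) P := by
    rw [Set.disjoint_left]
    intro z hz hzP
    have h1 : a * z ∈ wordBall S g₀ r := by rw [hball]; exact ⟨z, hz, rfl⟩
    exact Set.disjoint_left.1 hdisj h1 ⟨z, hzP, rfl⟩
  rw [hball] at hx hy
  obtain ⟨x₀, hx₀, rfl⟩ := hx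
  obtain ⟨y₀, hy₀, rfl⟩ := hy
  rw [projPt_smul] at hp hq
  obtain ⟨p₀, hp₀, rfl⟩ := hp
  obtain ⟨q₀, hq₀, rfl⟩ := hq
  rw [wordDist_mul_left]
  exact h (a⁻¹ * g₀) r hdisj' x₀ hx₀ y₀ hy₀ p₀ hp₀ q₀ hq₀

end Projections
section Helpers

variable {G : Type*} [Group G] {S : Finset G}
variable (hS : Subgroup.closure (S : Set G) = ⊤)

include hS in
lemma exists_geodesic_word (g : G) :
    ∃ l : List G, IsGeodesicWord S l ∧ l.prod = g ∧ l.length = wordLength S g := by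
  obtain ⟨l, h1, h2, h3⟩ := exists_geodesic_list hS g
  exact ⟨l, ⟨h1, by rw [h2, h3]⟩, h2, h3⟩

lemma verts_append (l₁ l₂ : List G) (s : ℕ) :
    verts (l₁ ++ l₂) (l₁.length + s) = l₁.prod * verts l₂ s := by
  unfold verts
  rw [List.take_append, List.prod_append]
  rw [List.take_of_length_le (by omega), Nat.add_sub_cancel_left]

lemma segVerts_subset (w : List G) {i j i' j' : ℕ} (hi : i ≤ i') (hj : j' ≤ j) :
    segVerts w i' j' ⊆ segVerts w i j := by
  rintro g ⟨k, h1, h2, rfl⟩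
  exact ⟨k, hi.trans h1, h2.trans hj, rfl⟩

lemma verts_mem_segVerts (w : List G) {i k j : ℕ} (h1 : i ≤ k) (h2 : k ≤ j) :
    verts w k ∈ segVerts w i j := ⟨k, h1, h2, rfl⟩

include hS in
lemma setDist_lipschitz {P : Set G} (hP : P.Nonempty) (x y : G) :
    setDist S x P ≤ wordDist S x y + setDist S y P := by
  obtain ⟨p, hp, hd⟩ := exists_projPt (S := S) (x := y) hP
  calc setDist S x P ≤ wordDist S x p := setDist_le hp.1
    _ ≤ wordDist S x y + wordDist S y p := wordDist_triangle hS x y p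
    _ = _ := by rw [hd]

lemma int_ivt {φ : ℕ → ℤ} {N : ℕ} (h0 : 0 ≤ φ 0) (hN : φ N ≤ 0)
    (hstep : ∀ t, t < N → |φ (t+1) - φ t| ≤ 2) : ∃ t ≤ N, -1 ≤ φ t ∧ φ t ≤ 1 := by
  induction N generalizing φ with
  | zero => exact ⟨0, le_refl 0, by omega, by omega⟩
  | succ n ih =>
      by_cases h : φ 0 ≤ 1
      · exact ⟨0, Nat.zero_le _, by omega, h⟩
      · have h1 : 0 ≤ φ 1 := by
          have h2 : |φ 1 - φ 0| ≤ 2 := by simpa using hstep 0 (Nat.succ_pos n)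
          rw [abs_le] at h2
          omega
        obtain ⟨t, ht, h2, h3⟩ := ih (φ := fun t => φ (t+1)) h1 hN
          (fun t ht => hstep (t+1) (by omega))
        exact ⟨t+1, by omega, h2, h3⟩

end Helpers
section PathBall

variable {G : Type*} [Group G] {S : Finset G}
variable (hS : Subgroup.closure (S : Set G) = ⊤)

include hS in
lemma path_in_ball {g₀ x y : G} {r : ℕ}
    (hx : x ∈ wordBall S g₀ r) (hy : y ∈ wordBall S g₀ r) :
    ∃ (N : ℕ) (c : ℕ → G), c 0 = x ∧ c N = y ∧ (∀ t ≤ N, c t ∈ wordBall S g₀ r) ∧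
      ∀ t < N, wordDist S (c t) (c (t+1)) ≤ 1 := by
  obtain ⟨l₁, hl₁, hp₁, hn₁⟩ := exists_geodesic_word hS (x⁻¹ * g₀)
  obtain ⟨l₂, hl₂, hp₂, hn₂⟩ := exists_geodesic_word hS (g₀⁻¹ * y)
  set l := l₁ ++ l₂ with hl
  refine ⟨l.length, fun t => x * verts l t, by simp [verts_zero], ?_, ?_, ?_⟩
  · show x * verts l l.length = y
    rw [verts_of_length_le l (le_refl _)]
    simp only [hl, List.prod_append, hp₁, hp₂]
    group
  · intro t ht
    simp only [hl, List.length_append] at ht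
    rcases le_or_gt t l₁.length with h | h
    · have hv : verts l t = verts l₁ t := by
        unfold verts
        rw [hl, List.take_append_of_le_length h]
      have hd : wordDist S (x * verts l t) g₀ = l₁.length - t := by
        have h2 : wordDist S (verts l₁ t) (verts l₁ l₁.length) = l₁.length - t :=
          geo_dist hS hl₁ h (le_refl _)
        rw [verts_of_length_le l₁ (le_refl _), hp₁] at h2
        rw [hv]
        unfold wordDist at h2 ⊢
        rw [← h2]
        congr 1
        group
      have : wordDist S g₀ (x * verts l t) ≤ l₁.length := by
        rw [wordDist_comm hS, hd]; omega
      have hxr : l₁.length ≤ r := by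
        have h9 : wordLength S (x⁻¹ * g₀) ≤ r := by
          have : wordLength S (x⁻¹ * g₀) = wordDist S g₀ x := wordDist_comm hS x g₀
          rw [this]
          exact hx
        omega
      exact Set.mem_setOf_eq ▸ (le_trans this hxr)
    · obtain ⟨s, rfl⟩ : ∃ s, t = l₁.length + s := ⟨t - l₁.length, by omega⟩
      have hv : verts l (l₁.length + s) = l₁.prod * verts l₂ s := verts_append l₁ l₂ s
      have hs : s ≤ l₂.length := by omega
      have hd : wordDist S g₀ (x * verts l (l₁.length + s)) = s := by
        rw [hv]
        unfold wordDist
        have : g₀⁻¹ * (x * (l₁.prod * verts l₂ s)) = verts l₂ s := by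
          rw [hp₁]; group
        rw [this]
        exact geo_wordLength_verts hS hl₂ hs
      have hyr : l₂.length ≤ r := by
        have : wordLength S (g₀⁻¹ * y) ≤ r := hy
        omega
      have : wordDist S g₀ (x * verts l (l₁.length + s)) ≤ r := by omega
      exact this
  · intro t ht
    have hlt : t < l.length := ht
    have hsucc : (l.take (t+1)).prod = (l.take t).prod * l.get ⟨t, hlt⟩ :=
      List.prod_take_succ l t hlt
    unfold wordDist
    have : (x * verts l t)⁻¹ * (x * verts l (t+1)) = l.get ⟨t, hlt⟩ := by
      unfold verts
      rw [hsucc]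
      group
    rw [this]
    apply wordLength_letter
    have hmem : l.get ⟨t, hlt⟩ ∈ l := List.get_mem l ⟨t, hlt⟩
    have hmem2 : l.get ⟨t, hlt⟩ ∈ l₁ ++ l₂ := by rw [← hl]; exact hmem
    rcases List.mem_append.1 hmem2 with h | h
    exacts [hl₁.1 _ h, hl₂.1 _ h]

end PathBall
section UnionLemma

variable {G : Type*} [Group G] {S : Finset G}
variable (hS : Subgroup.closure (S : Set G) = ⊤)

include hS in
/-- Core contradiction: in the overlapping-union situation, a ball disjoint from the
whole segment cannot project to both far-left and far-right points. -/
lemma union_core {w : List G} (hw : IsGeodesicWord S w) {Dn i i₁ j₁ j : ℕ}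
    (hii₁ : i ≤ i₁) (hij : j₁ ≤ j) (hjlen : j ≤ w.length)
    (hK : i₁ + 6 * Dn + 20 ≤ j₁)
    (hL : ContrN S Dn (segVerts w i j₁))
    (hR : ∀ a', i₁ ≤ a' → a' ≤ j₁ → ContrN S Dn (segVerts w a' j))
    {g₀ x y p q : G} {r kp kq : ℕ}
    (hdisj : Disjoint (wordBall S g₀ r) (segVerts w i j))
    (hx : x ∈ wordBall S g₀ r) (hy : y ∈ wordBall S g₀ r)
    (hp : p ∈ projPt S (segVerts w i j) x) (hq : q ∈ projPt S (segVerts w i j) y)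
    (hkp : verts w kp = p) (hkq : verts w kq = q) (hkpi : i ≤ kp) (hkqj : kq ≤ j)
    (hkplt : kp < i₁) (hkqgt : j₁ < kq) : False := by
  set L := segVerts w i j₁ with hLdef
  set a' := max i₁ (kp + 4 * Dn + 8) with ha'
  have ha'1 : i₁ ≤ a' := le_max_left _ _
  have ha'2 : a' ≤ j₁ := max_le (by omega) (by omega)
  have ha'3 : kp + 4 * Dn + 8 ≤ a' := le_max_right _ _
  set R' := segVerts w a' j with hRdef
  have hLsub : L ⊆ segVerts w i j := segVerts_subset w (le_refl i) hij
  have hRsub : R' ⊆ segVerts w i j := segVerts_subset w (hii₁.trans ha'1) (le_refl j)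
  have hLne : L.Nonempty := segVerts_nonempty w (hii₁.trans (by omega))
  have hRne : R'.Nonempty := segVerts_nonempty w (ha'2.trans hij)
  have hdisjL : Disjoint (wordBall S g₀ r) L := hdisj.mono_right hLsub
  have hdisjR : Disjoint (wordBall S g₀ r) R' := hdisj.mono_right hRsub
  have hpL : p ∈ projPt S L x :=
    projPt_mono hLsub hp (by rw [hLdef, ← hkp]; exact verts_mem_segVerts w hkpi (by omega))
  have hqR : q ∈ projPt S R' y :=
    projPt_mono hRsub hq (by rw [hRdef, ← hkq]; exact verts_mem_segVerts w (by omega) hkqj)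
  have hCL : ContrN S Dn L := hL
  have hCR : ContrN S Dn R' := hR a' ha'1 ha'2
  -- path from x to y inside the ball
  obtain ⟨N, c, hc0, hcN, hcball, hcstep⟩ := path_in_ball hS hx hy
  -- the balance function
  set φ : ℕ → ℤ := fun t => (setDist S (c t) R' : ℤ) - (setDist S (c t) L : ℤ) with hφ
  have hφ0 : 0 ≤ φ 0 := by
    have h1 : setDist S x L ≤ wordDist S x p := setDist_le hpL.1
    have h2 : wordDist S x p ≤ setDist S x R' := by
      obtain ⟨ρ, hρ, hρd⟩ := exists_projPt (S := S) (x := x) hRne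
      rw [← hρd]
      exact hp.2 ρ (hRsub hρ.1)
    have he : φ 0 = (setDist S (c 0) R' : ℤ) - (setDist S (c 0) L : ℤ) := rfl
    rw [hc0] at he
    omega
  have hφN : φ N ≤ 0 := by
    have h1 : setDist S y R' ≤ wordDist S y q := setDist_le hqR.1
    have h2 : wordDist S y q ≤ setDist S y L := by
      obtain ⟨ρ, hρ, hρd⟩ := exists_projPt (S := S) (x := y) hLne
      rw [← hρd]
      exact hq.2 ρ (hLsub hρ.1)
    have he : φ N = (setDist S (c N) R' : ℤ) - (setDist S (c N) L : ℤ) := rfl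
    rw [hcN] at he
    omega
  have hφstep : ∀ t, t < N → |φ (t+1) - φ t| ≤ 2 := by
    intro t ht
    have hstep := hcstep t ht
    have hstep' : wordDist S (c (t+1)) (c t) ≤ 1 := by
      rw [wordDist_comm hS]; exact hstep
    have hA : setDist S (c (t+1)) R' ≤ wordDist S (c (t+1)) (c t) + setDist S (c t) R' :=
      setDist_lipschitz hS hRne _ _
    have hA' : setDist S (c t) R' ≤ wordDist S (c t) (c (t+1)) + setDist S (c (t+1)) R' :=
      setDist_lipschitz hS hRne _ _
    have hB : setDist S (c (t+1)) L ≤ wordDist S (c (t+1)) (c t) + setDist S (c t) L :=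
      setDist_lipschitz hS hLne _ _
    have hB' : setDist S (c t) L ≤ wordDist S (c t) (c (t+1)) + setDist S (c (t+1)) L :=
      setDist_lipschitz hS hLne _ _
    have he1 : φ (t+1) = (setDist S (c (t+1)) R' : ℤ) - (setDist S (c (t+1)) L : ℤ) := rfl
    have he2 : φ t = (setDist S (c t) R' : ℤ) - (setDist S (c t) L : ℤ) := rfl
    rw [abs_le, he1, he2]
    omega
  obtain ⟨t₀, ht₀N, hφlo, hφhi⟩ := int_ivt hφ0 hφN hφstep
  have hcsball : c t₀ ∈ wordBall S g₀ r := hcball t₀ ht₀N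
  set cs := c t₀ with hcs
  set lam := setDist S cs L with hlam
  set rho := setDist S cs R' with hrho
  have hφt : φ t₀ = (rho : ℤ) - (lam : ℤ) := rfl
  have hbal1 : rho ≤ lam + 1 := by omega
  have hbal2 : lam ≤ rho + 1 := by omega
  obtain ⟨ξ, hξproj, hξd⟩ := exists_projPt (S := S) (x := cs) hLne
  obtain ⟨η, hηproj, hηd⟩ := exists_projPt (S := S) (x := cs) hRne
  -- window facts
  have hwin1 : wordDist S p ξ ≤ Dn := hCL g₀ r hdisjL x hx cs hcsball p hpL ξ hξproj
  have hwin2 : wordDist S q η ≤ Dn := hCR g₀ r hdisjR y hy cs hcsball q hqR η hηproj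
  -- distance between p and q
  have hdpq : wordDist S p q = kq - kp := by
    rw [← hkp, ← hkq]
    exact geo_dist hS hw (by omega) (by omega)
  -- lower bound on min lam rho
  have hξη : (kq - kp : ℕ) ≤ wordDist S q η + (wordDist S η ξ + wordDist S ξ p) := by
    have t1 : wordDist S p q ≤ wordDist S p ξ + wordDist S ξ q := wordDist_triangle hS _ _ _
    have t2 : wordDist S ξ q ≤ wordDist S ξ η + wordDist S η q := wordDist_triangle hS _ _ _
    have c1 : wordDist S p ξ = wordDist S ξ p := wordDist_comm hS _ _
    have c2 : wordDist S ξ η = wordDist S η ξ := wordDist_comm hS _ _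
    have c3 : wordDist S η q = wordDist S q η := wordDist_comm hS _ _
    omega
  have hξηle : wordDist S η ξ ≤ rho + lam := by
    have t1 : wordDist S η ξ ≤ wordDist S η cs + wordDist S cs ξ := wordDist_triangle hS _ _ _
    have c1 : wordDist S η cs = wordDist S cs η := wordDist_comm hS _ _
    omega
  have hc1 : wordDist S p ξ = wordDist S ξ p := wordDist_comm hS _ _
  have hminpos : 2 * Dn + 9 ≤ min lam rho := by
    have h1 : 6 * Dn + 21 ≤ kq - kp := by omega
    omega
  set rad := min lam rho - 1 with hrad
  have hdisjL' : Disjoint (wordBall S cs rad) L := by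
    rw [Set.disjoint_left]
    intro z hz hzL
    have h1 : wordDist S cs z ≤ rad := hz
    have h2 : lam ≤ wordDist S cs z := setDist_le hzL
    omega
  have hdisjR' : Disjoint (wordBall S cs rad) R' := by
    rw [Set.disjoint_left]
    intro z hz hzR
    have h1 : wordDist S cs z ≤ rad := hz
    have h2 : rho ≤ wordDist S cs z := setDist_le hzR
    omega
  have hcsBs : cs ∈ wordBall S cs rad := by
    show wordDist S cs cs ≤ rad
    rw [wordDist_self]
    omega
  -- walk from cs toward η
  obtain ⟨m, hm, hmp, hmlen⟩ := exists_geodesic_word hS (cs⁻¹ * η)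
  have hmlen' : m.length = rho := by
    rw [hmlen]
    exact hηd.trans hrho.symm
  set z := cs * verts m rad with hz
  have hradm : rad ≤ m.length := by omega
  have hzBs : z ∈ wordBall S cs rad := by
    show wordDist S cs z ≤ rad
    have h2 : wordDist S (verts m 0) (verts m rad) = rad - 0 := geo_dist hS hm (by omega) hradm
    rw [verts_zero] at h2
    have h3 : wordDist S cs z = wordDist S 1 (verts m rad) := by
      unfold wordDist
      congr 1
      rw [hz]
      group
    omega
  have hzη : wordDist S z η ≤ 2 := by
    have h2 : wordDist S (verts m rad) (verts m m.length) = m.length - rad :=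
      geo_dist hS hm hradm (le_refl _)
    have hvm : verts m m.length = cs⁻¹ * η := by rw [verts_of_length_le m (le_refl _), hmp]
    have h3 : wordDist S z η = m.length - rad := by
      rw [← h2, hvm]
      unfold wordDist
      congr 1
      rw [hz]
      group
    omega
  -- project z to L
  obtain ⟨ζ, hζproj, hζd⟩ := exists_projPt (S := S) (x := z) hLne
  have hwin3 : wordDist S ζ ξ ≤ Dn := hCL cs rad hdisjL' z hzBs cs hcsBs ζ hζproj ξ hξproj
  -- index of η
  obtain ⟨kη, hkη1, hkη2, hkηv0⟩ := hηproj.1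
  have hkηv : verts w kη = η := hkηv0
  have hkηkq : kη ≤ kq + Dn := by
    by_contra hcon
    push_neg at hcon
    have h1 : wordDist S q η = kη - kq := by
      rw [← hkq, ← hkηv]
      exact geo_dist hS hw (by omega) (by omega)
    omega
  -- lower bound for wordDist S z ζ
  have hlow : (kq - kp : ℕ) ≤ wordDist S q η +
      (wordDist S z η + (wordDist S z ζ + (wordDist S ζ ξ + wordDist S ξ p))) := by
    have t1 : wordDist S p q ≤ wordDist S p ξ + wordDist S ξ q := wordDist_triangle hS _ _ _
    have t2 : wordDist S ξ q ≤ wordDist S ξ ζ + wordDist S ζ q := wordDist_triangle hS _ _ _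
    have t3 : wordDist S ζ q ≤ wordDist S ζ z + wordDist S z q := wordDist_triangle hS _ _ _
    have t4 : wordDist S z q ≤ wordDist S z η + wordDist S η q := wordDist_triangle hS _ _ _
    have c2 : wordDist S ξ ζ = wordDist S ζ ξ := wordDist_comm hS _ _
    have c3 : wordDist S ζ z = wordDist S z ζ := wordDist_comm hS _ _
    have c5 : wordDist S η q = wordDist S q η := wordDist_comm hS _ _
    omega
  -- upper bound for wordDist S z ζ
  have hup : wordDist S z ζ ≤ 2 + (kη - a') := by
    have hva : verts w a' ∈ L := verts_mem_segVerts w (hii₁.trans ha'1) ha'2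
    have h1 : wordDist S z ζ = setDist S z L := hζd
    have h2 : setDist S z L ≤ wordDist S z (verts w a') := setDist_le hva
    have h3 : wordDist S z (verts w a') ≤ wordDist S z η + wordDist S η (verts w a') :=
      wordDist_triangle hS _ _ _
    have h4 : wordDist S η (verts w a') ≤ kη - a' := by
      rcases le_or_gt a' kη with hcase | hcase
      · have h5 : wordDist S (verts w a') (verts w kη) = kη - a' :=
          geo_dist hS hw hcase (by omega)
        have h6 : wordDist S η (verts w a') = kη - a' := by
          rw [← hkηv, wordDist_comm hS]
          exact h5
        omega
      · omega
    omega
  -- assemble the contradiction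
  have hkqbig : 6 * Dn + 21 ≤ kq - kp := by omega
  omega

end UnionLemma
section UnionWrap

variable {G : Type*} [Group G] {S : Finset G}
variable (hS : Subgroup.closure (S : Set G) = ⊤)

include hS in
/-- Union of overlapping contracting segments is contracting (with the same constant). -/
lemma union_contr {w : List G} (hw : IsGeodesicWord S w) {Dn i i₁ j₁ j : ℕ}
    (hii₁ : i ≤ i₁) (hij : j₁ ≤ j) (hjlen : j ≤ w.length)
    (hK : i₁ + 6 * Dn + 20 ≤ j₁)
    (hL : ContrN S Dn (segVerts w i j₁))
    (hR : ∀ a', i₁ ≤ a' → a' ≤ j₁ → ContrN S Dn (segVerts w a' j)) :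
    ContrN S Dn (segVerts w i j) := by
  intro g₀ r hdisj x hx y hy p hp q hq
  obtain ⟨kp, hkpi, hkpj, hkpv0⟩ := hp.1
  obtain ⟨kq, hkqi, hkqj, hkqv0⟩ := hq.1
  have hkpv : verts w kp = p := hkpv0
  have hkqv : verts w kq = q := hkqv0
  by_cases hcase1 : kp ≤ j₁ ∧ kq ≤ j₁
  · have hsub : segVerts w i j₁ ⊆ segVerts w i j := segVerts_subset w (le_refl i) hij
    exact hL g₀ r (hdisj.mono_right hsub) x hx y hy
      p (projPt_mono hsub hp (by rw [← hkpv]; exact verts_mem_segVerts w hkpi hcase1.1))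
      q (projPt_mono hsub hq (by rw [← hkqv]; exact verts_mem_segVerts w hkqi hcase1.2))
  by_cases hcase2 : i₁ ≤ kp ∧ i₁ ≤ kq
  · have hsub : segVerts w i₁ j ⊆ segVerts w i j := segVerts_subset w hii₁ (le_refl j)
    exact hR i₁ (le_refl i₁) (by omega) g₀ r (hdisj.mono_right hsub) x hx y hy
      p (projPt_mono hsub hp (by rw [← hkpv]; exact verts_mem_segVerts w hcase2.1 hkpj))
      q (projPt_mono hsub hq (by rw [← hkqv]; exact verts_mem_segVerts w hcase2.2 hkqj))
  exfalso
  push_neg at hcase1 hcase2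
  rcases lt_or_ge kp i₁ with h1 | h1
  · have h2 : j₁ < kq := hcase1 (by omega)
    exact union_core hS hw hii₁ hij hjlen hK hL hR hdisj hx hy hp hq hkpv hkqv hkpi hkqj h1 h2
  · have h3 : kq < i₁ := hcase2 h1
    have h4 : j₁ < kp := by
      rcases le_or_gt kp j₁ with h | h
      · omega
      · exact h
    exact union_core hS hw hii₁ hij hjlen hK hL hR hdisj hy hx hq hp hkqv hkpv hkqi hkpj h3 h4

end UnionWrap

section MorseLemma

variable {G : Type*} [Group G] {S : Finset G}
variable (hS : Subgroup.closure (S : Set G) = ⊤)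

include hS in
/-- Hop lemma: along a geodesic staying far from a contracting set, the projections
move slowly. -/
lemma hop_lemma {P : Set G} (hP : P.Nonempty) {Dn : ℕ} (hC : ContrN S Dn P)
    {v : List G} (hv : IsGeodesicWord S v) :
    ∀ n, ∀ s₁ s₂ : ℕ, s₂ - s₁ ≤ n → s₁ ≤ s₂ → s₂ ≤ v.length →
    (∀ s, s₁ ≤ s → s ≤ s₂ → Dn + 2 ≤ setDist S (verts v s) P) →
    ∀ p₁ ∈ projPt S P (verts v s₁), ∀ p₂ ∈ projPt S P (verts v s₂),
      (Dn + 1) * wordDist S p₁ p₂ ≤ Dn * (s₂ - s₁) + Dn * (Dn + 1) := by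
  intro n
  induction n with
  | zero =>
      intro s₁ s₂ hn hle hlen hfar p₁ hp₁ p₂ hp₂
      have : s₁ = s₂ := by omega
      subst this
      have h0 : wordDist S (verts v s₁) (verts v s₁) = 0 := wordDist_self _
      have hball : Disjoint (wordBall S (verts v s₁) 0) P := by
        rw [Set.disjoint_left]
        intro z hz hzP
        have h1 : wordDist S (verts v s₁) z ≤ 0 := hz
        have h2 : Dn + 2 ≤ setDist S (verts v s₁) P := hfar s₁ (le_refl _) (le_refl _)
        have h3 : setDist S (verts v s₁) P ≤ wordDist S (verts v s₁) z := setDist_le hzP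
        omega
      have hmem : verts v s₁ ∈ wordBall S (verts v s₁) 0 := by
        show wordDist S (verts v s₁) (verts v s₁) ≤ 0
        omega
      have := hC (verts v s₁) 0 hball _ hmem _ hmem p₁ hp₁ p₂ hp₂
      nlinarith [this]
  | succ n ih =>
      intro s₁ s₂ hn hle hlen hfar p₁ hp₁ p₂ hp₂
      set h₁ := setDist S (verts v s₁) P with hh₁
      have hfar1 : Dn + 2 ≤ h₁ := hfar s₁ (le_refl _) hle
      have hballdisj : Disjoint (wordBall S (verts v s₁) (h₁ - 1)) P := by
        rw [Set.disjoint_left]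
        intro z hz hzP
        have h2 : wordDist S (verts v s₁) z ≤ h₁ - 1 := hz
        have h3 : h₁ ≤ wordDist S (verts v s₁) z := setDist_le hzP
        omega
      have hmem1 : verts v s₁ ∈ wordBall S (verts v s₁) (h₁ - 1) := by
        show wordDist S (verts v s₁) (verts v s₁) ≤ h₁ - 1
        rw [wordDist_self]
        omega
      rcases le_or_gt (s₂ - s₁) (h₁ - 1) with hcase | hcase
      · -- single ball
        have hmem2 : verts v s₂ ∈ wordBall S (verts v s₁) (h₁ - 1) := by
          show wordDist S (verts v s₁) (verts v s₂) ≤ h₁ - 1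
          rw [geo_dist hS hv hle hlen]
          omega
        have := hC (verts v s₁) (h₁ - 1) hballdisj _ hmem1 _ hmem2 p₁ hp₁ p₂ hp₂
        nlinarith [this]
      · -- hop
        set s' := s₁ + (h₁ - 1) with hs'
        have hs'le : s' ≤ s₂ := by omega
        have hs'len : s' ≤ v.length := by omega
        have hmem2 : verts v s' ∈ wordBall S (verts v s₁) (h₁ - 1) := by
          show wordDist S (verts v s₁) (verts v s') ≤ h₁ - 1
          rw [geo_dist hS hv (by omega) hs'len]
          omega
        obtain ⟨p', hp', _⟩ := exists_projPt (S := S) (x := verts v s') hP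
        have hhop : wordDist S p₁ p' ≤ Dn :=
          hC (verts v s₁) (h₁ - 1) hballdisj _ hmem1 _ hmem2 p₁ hp₁ p' hp'
        have hrec := ih s' s₂ (by omega) hs'le hlen
          (fun s hs1 hs2 => hfar s (by omega) hs2) p' hp' p₂ hp₂
        have htri : wordDist S p₁ p₂ ≤ wordDist S p₁ p' + wordDist S p' p₂ :=
          wordDist_triangle hS _ _ _
        have hstep : Dn + 1 ≤ h₁ - 1 := by omega
        have hsplit : Dn * (s₂ - s₁) = Dn * (s₂ - s') + Dn * (h₁ - 1) := by
          rw [← Nat.mul_add]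
          congr 1
          omega
        calc (Dn + 1) * wordDist S p₁ p₂
            ≤ (Dn + 1) * (wordDist S p₁ p' + wordDist S p' p₂) := Nat.mul_le_mul_left _ htri
          _ = (Dn + 1) * wordDist S p₁ p' + (Dn + 1) * wordDist S p' p₂ := by ring
          _ ≤ (Dn + 1) * Dn + (Dn * (s₂ - s') + Dn * (Dn + 1)) := by
              have h11 := Nat.mul_le_mul_left (Dn + 1) hhop
              omega
          _ ≤ Dn * (s₂ - s₁) + Dn * (Dn + 1) := by
              have h9 : Dn * (Dn + 1) ≤ Dn * (h₁ - 1) := Nat.mul_le_mul_left _ hstep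
              have h12 : (Dn + 1) * Dn = Dn * (Dn + 1) := by ring
              omega

include hS in
/-- Contracting implies Morse: a geodesic with endpoints near `P` stays near `P`. -/
lemma morse_lemma {P : Set G} (hP : P.Nonempty) {Dn : ℕ} (hC : ContrN S Dn P)
    {v : List G} (hv : IsGeodesicWord S v)
    (h0 : setDist S (verts v 0) P ≤ 1) (hN : setDist S (verts v v.length) P ≤ 1) :
    ∀ t ≤ v.length, setDist S (verts v t) P ≤ (Dn + 2) + ((Dn+1) * (2*(Dn+2) + Dn) + 2) := by
  intro t ht
  by_contra hbig
  push_neg at hbig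
  classical
  have htfar : Dn + 2 ≤ setDist S (verts v t) P := by omega
  set Q : ℕ → Prop := fun s => setDist S (verts v s) P < Dn + 2 with hQ
  have hQ0 : Q 0 := by rw [hQ]; omega
  set s₁ := Nat.findGreatest Q t with hs₁def
  have hs₁ : Q s₁ := Nat.findGreatest_spec (Nat.zero_le t) hQ0
  have hs₁t : s₁ ≤ t := Nat.findGreatest_le t
  have hgr : ∀ s, s₁ < s → s ≤ t → ¬ Q s := fun s h1 h2 => Nat.findGreatest_is_greatest h1 h2
  have hs₁lt : s₁ < t := by
    rcases Nat.lt_or_ge s₁ t with h | h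
    · exact h
    · exfalso
      have : s₁ = t := by omega
      rw [this] at hs₁
      exact absurd hs₁ (by rw [hQ]; omega)
  have hRex : ∃ k, Q (t + k) := by
    refine ⟨v.length - t, ?_⟩
    rw [show t + (v.length - t) = v.length by omega]
    rw [hQ]; omega
  set k₀ := Nat.find hRex with hk₀def
  have hk₀ : Q (t + k₀) := Nat.find_spec hRex
  have hmin : ∀ k, k < k₀ → ¬ Q (t + k) := fun k hk => Nat.find_min hRex hk
  have hk₀le : k₀ ≤ v.length - t := Nat.find_min' hRex (by
    rw [show t + (v.length - t) = v.length by omega]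
    rw [hQ]; omega)
  have hk₀pos : 0 < k₀ := by
    rcases Nat.eq_zero_or_pos k₀ with h | h
    · exfalso
      rw [h] at hk₀
      simp only [Nat.add_zero] at hk₀
      rw [hQ] at hk₀
      omega
    · exact h
  set s₂ := t + k₀ with hs₂def
  have hs₂len : s₂ ≤ v.length := by omega
  have hfar : ∀ s, s₁ + 1 ≤ s → s ≤ s₂ - 1 → Dn + 2 ≤ setDist S (verts v s) P := by
    intro s hlo hhi
    rcases le_or_gt s t with h | h
    · have := hgr s (by omega) h
      rw [hQ] at this; omega
    · have hk : s - t < k₀ := by omega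
      have := hmin (s - t) hk
      rw [show t + (s - t) = s by omega] at this
      rw [hQ] at this; omega
  obtain ⟨p₁, hp₁, hp₁d⟩ := exists_projPt (S := S) (x := verts v (s₁ + 1)) hP
  obtain ⟨p₂, hp₂, hp₂d⟩ := exists_projPt (S := S) (x := verts v (s₂ - 1)) hP
  have hs₁₂ : s₁ + 1 ≤ s₂ - 1 := by omega
  have hhop := hop_lemma hS hP hC hv ((s₂ - 1) - (s₁ + 1)) (s₁ + 1) (s₂ - 1) (le_refl _)
    hs₁₂ (by omega) hfar p₁ hp₁ p₂ hp₂
  obtain ⟨X, hX⟩ : ∃ X, s₂ - 1 = (s₁ + 1) + X := ⟨s₂ - 1 - (s₁ + 1), by omega⟩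
  have hhop' : (Dn + 1) * wordDist S p₁ p₂ ≤ Dn * X + Dn * (Dn + 1) := by
    rw [show (s₂ - 1) - (s₁ + 1) = X by omega] at hhop
    exact hhop
  -- distances from endpoints of the excursion to P
  have hend1 : setDist S (verts v (s₁ + 1)) P ≤ Dn + 2 := by
    have hlip := setDist_lipschitz hS hP (verts v (s₁ + 1)) (verts v s₁)
    have hone : wordDist S (verts v (s₁ + 1)) (verts v s₁) ≤ 1 := by
      rw [wordDist_comm hS]
      rw [geo_dist hS hv (by omega) (by omega)]
      omega
    rw [hQ] at hs₁
    omega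
  have hend2 : setDist S (verts v (s₂ - 1)) P ≤ Dn + 2 := by
    have hlip := setDist_lipschitz hS hP (verts v (s₂ - 1)) (verts v s₂)
    have hone : wordDist S (verts v (s₂ - 1)) (verts v s₂) ≤ 1 := by
      rw [geo_dist hS hv (by omega) hs₂len]
      omega
    rw [hQ] at hk₀
    omega
  have htriX : X ≤ 2 * (Dn + 2) + wordDist S p₁ p₂ := by
    have hgeo : wordDist S (verts v (s₁ + 1)) (verts v (s₂ - 1)) = X := by
      rw [geo_dist hS hv hs₁₂ (by omega)]
      omega
    have t1 : wordDist S (verts v (s₁ + 1)) (verts v (s₂ - 1)) ≤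
        wordDist S (verts v (s₁ + 1)) p₁ + wordDist S p₁ (verts v (s₂ - 1)) :=
      wordDist_triangle hS _ _ _
    have t2 : wordDist S p₁ (verts v (s₂ - 1)) ≤
        wordDist S p₁ p₂ + wordDist S p₂ (verts v (s₂ - 1)) := wordDist_triangle hS _ _ _
    have c1 : wordDist S p₂ (verts v (s₂ - 1)) = wordDist S (verts v (s₂ - 1)) p₂ :=
      wordDist_comm hS _ _
    rw [hp₁d] at t1
    rw [c1, hp₂d] at t2
    omega
  obtain ⟨T, hT⟩ : ∃ T, t = s₁ + 1 + T := ⟨t - s₁ - 1, by omega⟩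
  have hTX : T ≤ X := by omega
  have hdistT : setDist S (verts v t) P ≤ (Dn + 2) + T + 1 := by
    have hlip := setDist_lipschitz hS hP (verts v t) (verts v s₁)
    have hdts : wordDist S (verts v t) (verts v s₁) = t - s₁ := by
      rw [wordDist_comm hS]
      exact geo_dist hS hv (by omega) (by omega)
    rw [hQ] at hs₁
    omega
  have hTbig : (Dn + 1) * (2 * (Dn + 2) + Dn) + 1 ≤ T := by omega
  -- final nonlinear contradiction
  have g1 : (Dn + 1) * X ≤ (Dn + 1) * (2 * (Dn + 2) + wordDist S p₁ p₂) :=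
    Nat.mul_le_mul_left _ htriX
  have g2 : (Dn + 1) * (2 * (Dn + 2) + wordDist S p₁ p₂) =
      2 * (Dn + 2) * (Dn + 1) + (Dn + 1) * wordDist S p₁ p₂ := by ring
  have g3 : (Dn + 1) * X = Dn * X + X := by ring
  have g4 : (Dn + 1) * (2 * (Dn + 2) + Dn) = 2 * (Dn + 2) * (Dn + 1) + Dn * (Dn + 1) := by
    ring
  linarith [g1, g2, g3, g4, hhop', hTX, hTbig]

end MorseLemma
section CutLemma

variable {G : Type*} [Group G] {S : Finset G}
variable (hS : Subgroup.closure (S : Set G) = ⊤)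

include hS in
/-- Cut lemma: a geodesic to a point one past the tip of a contracting geodesic word
passes near any prescribed vertex, giving a splitting of the length. -/
lemma cut_lemma {W : List G} (hW : IsGeodesicWord S W) {Dn : ℕ}
    (hC : ContrN S Dn (segVerts W 0 W.length)) {n' : ℕ} (hn'3 : 3 ≤ n')
    (hn'len : n' ≤ W.length) {α z : G} (hα : wordLength S α ≤ 1) (hz : z = W.prod * α) :
    ∃ g : G, wordLength S g ≤ ((Dn+2) + ((Dn+1) * (2*(Dn+2) + Dn) + 2)) + Dn + 2 ∧
      wordLength S (verts W n' * g) + wordLength S ((verts W n' * g)⁻¹ * z)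
        ≤ wordLength S z := by
  classical
  set M := (Dn+2) + ((Dn+1) * (2*(Dn+2) + Dn) + 2) with hM
  set P := segVerts W 0 W.length with hP
  have hPne : P.Nonempty := segVerts_nonempty W (Nat.zero_le _)
  obtain ⟨v, hv, hvp, hvlen⟩ := exists_geodesic_word hS z
  set ℓ := v.length with hℓ
  have hvz : verts v ℓ = z := by rw [hℓ, verts_of_length_le v (le_refl _), hvp]
  have hWlast : verts W W.length = W.prod := verts_of_length_le W (le_refl _)
  have hzW : wordDist S (verts v ℓ) (verts W W.length) ≤ 1 := by
    rw [hvz, hWlast]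
    show wordLength S (z⁻¹ * W.prod) ≤ 1
    rw [hz]
    have he : (W.prod * α)⁻¹ * W.prod = α⁻¹ := by group
    rw [he, wordLength_inv hS]
    exact hα
  have h0 : setDist S (verts v 0) P ≤ 1 := by
    have h1 : verts W 0 ∈ P := verts_mem_segVerts W (le_refl 0) (Nat.zero_le _)
    have h2 : setDist S (verts v 0) P ≤ wordDist S (verts v 0) (verts W 0) := setDist_le h1
    have h3 : wordDist S (verts v 0) (verts W 0) = 0 := by
      rw [verts_zero, verts_zero, wordDist_self]
    omega
  have hNend : setDist S (verts v ℓ) P ≤ 1 := by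
    have h1 : verts W W.length ∈ P := verts_mem_segVerts W (Nat.zero_le _) (le_refl _)
    have h2 : setDist S (verts v ℓ) P ≤ wordDist S (verts v ℓ) (verts W W.length) :=
      setDist_le h1
    omega
  have hmorse : ∀ s ≤ ℓ, setDist S (verts v s) P ≤ M := by
    intro s hs
    exact morse_lemma hS hPne hC hv h0 hNend s hs
  set a' := verts W n' with ha'
  set Good : ℕ → Prop := fun s => ∃ s', s' ≤ s ∧ wordDist S (verts v s') a' ≤ M + Dn + 2
    with hGoodDef
  set Left : ℕ → Prop := fun s => ∀ p ∈ projPt S P (verts v s),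
    ∀ k, k ≤ W.length → verts W k = p → k + 3 ≤ n' with hLeftDef
  have main : ∀ s, s ≤ ℓ → Left s ∨ Good s := by
    intro s
    induction s with
    | zero =>
        intro _
        left
        rw [hLeftDef]
        intro p hp k hklen hkv
        have h1 : verts W 0 ∈ P := verts_mem_segVerts W (le_refl 0) (Nat.zero_le _)
        have h2 : wordDist S (verts v 0) p ≤ wordDist S (verts v 0) (verts W 0) :=
          hp.2 _ h1
        have h3 : wordDist S (verts v 0) (verts W 0) = 0 := by
          rw [verts_zero, verts_zero, wordDist_self]
        have h4 : verts v 0 = p := wordDist_eq_zero hS (by omega)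
        have h5 : wordDist S (verts W 0) (verts W k) = k - 0 :=
          geo_dist hS hW (Nat.zero_le k) hklen
        have h6 : verts W 0 = verts v 0 := by rw [verts_zero, verts_zero]
        rw [hkv, h6, h4, wordDist_self] at h5
        omega
    | succ s ih =>
        intro hs1
        have hsl : s ≤ ℓ := by omega
        rcases ih hsl with hLeft | hGood
        · -- step
          obtain ⟨ps, hps, hpsd⟩ := exists_projPt (S := S) (x := verts v s) hPne
          obtain ⟨kps, _, hk2, hkv0⟩ := hps.1
          have hkv : verts W kps = ps := hkv0
          have hkn' : kps + 3 ≤ n' := by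
            rw [hLeftDef] at hLeft
            exact hLeft ps hps kps hk2 hkv
          have hdy : wordDist S (verts v s) (verts v (s+1)) = 1 := by
            have := geo_dist hS hv (show s ≤ s+1 by omega) (show s+1 ≤ v.length from hs1)
            omega
          have hstep : ∀ p' ∈ projPt S P (verts v (s+1)), wordDist S ps p' ≤ Dn + 4 := by
            intro p' hp'
            rcases le_or_gt 2 (setDist S (verts v s) P) with hfar | hnear
            · have hdisj : Disjoint (wordBall S (verts v s) (setDist S (verts v s) P - 1)) P := by
                rw [Set.disjoint_left]
                intro w hw hwP
                have h5 : wordDist S (verts v s) w ≤ setDist S (verts v s) P - 1 := hw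
                have h6 : setDist S (verts v s) P ≤ wordDist S (verts v s) w := setDist_le hwP
                omega
              have hm1 : verts v s ∈ wordBall S (verts v s) (setDist S (verts v s) P - 1) := by
                show wordDist S (verts v s) (verts v s) ≤ _
                rw [wordDist_self]
                omega
              have hm2 : verts v (s+1) ∈ wordBall S (verts v s) (setDist S (verts v s) P - 1) := by
                show wordDist S (verts v s) (verts v (s+1)) ≤ _
                omega
              have := hC (verts v s) _ hdisj _ hm1 _ hm2 ps hps p' hp'
              omega
            · have t1 : wordDist S ps p' ≤ wordDist S ps (verts v s) + wordDist S (verts v s) p' :=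
                wordDist_triangle hS _ _ _
              have t2 : wordDist S (verts v s) p' ≤
                  wordDist S (verts v s) (verts v (s+1)) + wordDist S (verts v (s+1)) p' :=
                wordDist_triangle hS _ _ _
              have c1 : wordDist S ps (verts v s) = wordDist S (verts v s) ps :=
                wordDist_comm hS _ _
              have e1 : wordDist S (verts v s) ps = setDist S (verts v s) P := hpsd
              have e2 : wordDist S (verts v (s+1)) p' = setDist S (verts v (s+1)) P :=
                projPt_dist hp'
              have lip : setDist S (verts v (s+1)) P ≤
                  wordDist S (verts v (s+1)) (verts v s) + setDist S (verts v s) P :=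
                setDist_lipschitz hS hPne _ _
              have c2 : wordDist S (verts v (s+1)) (verts v s) = 1 := by
                rw [wordDist_comm hS]
                exact hdy
              omega
          by_cases hall : ∀ p ∈ projPt S P (verts v (s+1)),
              ∀ k, k ≤ W.length → verts W k = p → k + 3 ≤ n'
          · left
            rw [hLeftDef]
            exact hall
          · right
            push_neg at hall
            obtain ⟨p', hp', k', hk'len, hk'v, hk'big⟩ := hall
            have hd1 : wordDist S ps p' ≤ Dn + 4 := hstep p' hp'
            have hk'up : k' ≤ kps + (Dn + 4) := by
              rcases le_or_gt k' kps with h | h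
              · omega
              · have h5 : wordDist S (verts W kps) (verts W k') = k' - kps :=
                  geo_dist hS hW (by omega) hk'len
                rw [hkv, hk'v] at h5
                omega
            have hpa : wordDist S p' a' ≤ Dn + 2 := by
              rcases le_or_gt k' n' with h | h
              · have h5 : wordDist S (verts W k') (verts W n') = n' - k' :=
                  geo_dist hS hW h hn'len
                rw [hk'v] at h5
                rw [ha', h5]
                omega
              · have h5 : wordDist S (verts W n') (verts W k') = k' - n' :=
                  geo_dist hS hW (by omega) hk'len
                rw [hk'v] at h5
                have c3 : wordDist S p' a' = wordDist S a' p' := wordDist_comm hS _ _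
                rw [c3, ha', h5]
                omega
            have hda : wordDist S (verts v (s+1)) a' ≤ M + Dn + 2 := by
              have t1 : wordDist S (verts v (s+1)) a' ≤
                  wordDist S (verts v (s+1)) p' + wordDist S p' a' := wordDist_triangle hS _ _ _
              have e2 : wordDist S (verts v (s+1)) p' = setDist S (verts v (s+1)) P :=
                projPt_dist hp'
              have hm := hmorse (s+1) hs1
              omega
            rw [hGoodDef]
            exact ⟨s+1, le_refl _, hda⟩
        · right
          rw [hGoodDef] at hGood ⊢
          obtain ⟨s', h1, h2⟩ := hGood
          exact ⟨s', by omega, h2⟩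
  have hGoodl : Good ℓ := by
    rcases main ℓ (le_refl ℓ) with hLeft | hGood
    · exfalso
      obtain ⟨p, hp, hpd⟩ := exists_projPt (S := S) (x := verts v ℓ) hPne
      obtain ⟨k, _, hk2, hkv0⟩ := hp.1
      have hkv : verts W k = p := hkv0
      rw [hLeftDef] at hLeft
      have hk3 : k + 3 ≤ n' := hLeft p hp k hk2 hkv
      have hd1 : wordDist S (verts v ℓ) p ≤ 1 := by
        rw [hpd]; exact hNend
      have hd2 : wordDist S p (verts W W.length) ≤ 2 := by
        have t1 : wordDist S p (verts W W.length) ≤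
            wordDist S p (verts v ℓ) + wordDist S (verts v ℓ) (verts W W.length) :=
          wordDist_triangle hS _ _ _
        have c1 : wordDist S p (verts v ℓ) = wordDist S (verts v ℓ) p := wordDist_comm hS _ _
        omega
      have hd3 : wordDist S (verts W k) (verts W W.length) = W.length - k :=
        geo_dist hS hW hk2 (le_refl _)
      rw [hkv] at hd3
      omega
    · exact hGood
  rw [hGoodDef] at hGoodl
  obtain ⟨s', hs'l, hds'⟩ := hGoodl
  refine ⟨a'⁻¹ * verts v s', ?_, ?_⟩
  · have : wordLength S (a'⁻¹ * verts v s') = wordDist S a' (verts v s') := rfl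
    rw [this, wordDist_comm hS]
    have c1 : wordDist S (verts v s') a' ≤ M + Dn + 2 := hds'
    omega
  · have e1 : a' * (a'⁻¹ * verts v s') = verts v s' := by group
    rw [e1]
    have e2 : wordLength S (verts v s') = s' := geo_wordLength_verts hS hv hs'l
    have e3 : wordLength S ((verts v s')⁻¹ * z) = ℓ - s' := by
      have h4 : wordDist S (verts v s') (verts v ℓ) = ℓ - s' := geo_dist hS hv hs'l (le_refl _)
      rw [hvz] at h4
      exact h4
    have e4 : wordLength S z = ℓ := by omega
    omega

end CutLemma
section Transfer

variable {G : Type*} [Group G] {S : Finset G}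

/-- Hereditarily `Dn`-contracting geodesic word (ℕ-version). -/
def HDCN (S : Finset G) (Dn : ℕ) (w : List G) : Prop :=
  IsGeodesicWord S w ∧ ∀ i j : ℕ, i ≤ j → j ≤ w.length → ContrN S Dn (segVerts w i j)

lemma isContractingWord_iff_HDCN {D : ℝ} (hD : 0 ≤ D) (w : List G) :
    IsContractingWord S D w ↔ HDCN S ⌊D⌋₊ w := isContractingWord_iff hD w

variable (hS : Subgroup.closure (S : Set G) = ⊤)

include hS in
lemma HDCN_prefix {u w : List G} {Dn : ℕ} (h : HDCN S Dn (u ++ w)) : HDCN S Dn u := by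
  refine ⟨geo_prefix hS h.1, ?_⟩
  intro i j hij hj
  have := h.2 i j hij (by rw [List.length_append]; omega)
  rwa [segVerts_append_left u w hj] at this

lemma smul_image_cancel (a : G) (Q : Set G) :
    (fun g => a⁻¹ * g) '' ((fun g => a * g) '' Q) = Q := by
  ext g
  simp only [Set.mem_image]
  constructor
  · rintro ⟨h, ⟨g₀, hg₀, rfl⟩, rfl⟩
    rwa [show a⁻¹ * (a * g₀) = g₀ by group]
  · intro hg
    exact ⟨a * g, ⟨g, hg, rfl⟩, by group⟩

lemma ContrN_of_smul {Dn : ℕ} {P : Set G} (a : G)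
    (h : ContrN S Dn ((fun g => a * g) '' P)) : ContrN S Dn P := by
  have := ContrN_smul (S := S) a⁻¹ h
  rwa [smul_image_cancel] at this

lemma segVerts_shift (u₀ t w₂ : List G) (a b : ℕ) :
    segVerts (u₀ ++ t ++ w₂) (u₀.length + a) (u₀.length + b) =
      (fun g => u₀.prod * g) '' segVerts (t ++ w₂) a b := by
  have hassoc : u₀ ++ t ++ w₂ = u₀ ++ (t ++ w₂) := by rw [List.append_assoc]
  rw [hassoc]
  ext g
  constructor
  · rintro ⟨k, h1, h2, rfl⟩
    obtain ⟨k', rfl⟩ : ∃ k', k = u₀.length + k' := ⟨k - u₀.length, by omega⟩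
    refine ⟨verts (t ++ w₂) k', ⟨k', by omega, by omega, rfl⟩, ?_⟩
    exact (verts_append u₀ (t ++ w₂) k').symm
  · rintro ⟨g₀, ⟨k', h1, h2, rfl⟩, rfl⟩
    exact ⟨u₀.length + k', by omega, by omega, (verts_append u₀ (t ++ w₂) k')⟩

include hS in
/-- Main transfer: two long hereditarily contracting words with the same tail and
the same relative distance data have the same contracting extensions. -/
lemma transfer {Dn : ℕ} {u u' : List G}
    (hu : HDCN S Dn u) (hu' : HDCN S Dn u')
    (hlen : 6 * Dn + 20 ≤ u.length) (hlen' : 6 * Dn + 20 ≤ u'.length)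
    (htail : u.drop (u.length - (6 * Dn + 20)) = u'.drop (u'.length - (6 * Dn + 20)))
    (hfun : ∀ g : G, wordLength S g ≤ ((Dn+2) + ((Dn+1) * (2*(Dn+2) + Dn) + 2)) + Dn + 2 →
      (wordLength S (u.prod * g) : ℤ) - u.length =
        (wordLength S (u'.prod * g) : ℤ) - u'.length) :
    ∀ w₂ : List G, HDCN S Dn (u ++ w₂) → HDCN S Dn (u' ++ w₂) := by
  set K := 6 * Dn + 20 with hK
  set R := ((Dn+2) + ((Dn+1) * (2*(Dn+2) + Dn) + 2)) + Dn + 2 with hR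
  intro w₂
  induction w₂ using List.reverseRecOn with
  | nil => intro _; simpa using hu'
  | append_singleton w α ih =>
      intro H
      rw [show u' ++ (w ++ [α]) = u' ++ w ++ [α] from (List.append_assoc u' w [α]).symm]
      have Hprev : HDCN S Dn (u ++ w) := by
        apply HDCN_prefix hS (w := [α])
        rwa [← List.append_assoc] at H
      have hu'w : HDCN S Dn (u' ++ w) := ih Hprev
      have hαlet : IsLetter S α := by
        have := H.1.1 α (by simp)
        exact this
      set n := u.length with hn
      set n' := u'.length with hn'
      set m := w.length with hm
      -- geodesicity
      have hlets : ∀ x ∈ u' ++ w ++ [α], IsLetter S x := by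
        intro x hx
        rcases List.mem_append.1 hx with hx | hx
        · exact hu'w.1.1 x hx
        · simp at hx
          subst hx
          exact hαlet
      have hgeo : IsGeodesicWord S (u' ++ w ++ [α]) := by
        refine ⟨hlets, ?_⟩
        have hle : wordLength S (u' ++ w ++ [α]).prod ≤ (u' ++ w ++ [α]).length :=
          wordLength_le hlets rfl
        rcases eq_or_lt_of_le hle with he | hlt
        · exact he
        · exfalso
          set z := (u' ++ w ++ [α]).prod with hzdef
          have hz : z = (u' ++ w).prod * α := by rw [hzdef, List.prod_append]; simp
          have hwlz : wordLength S z ≤ n' + m := by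
            have : (u' ++ w ++ [α]).length = n' + m + 1 := by simp [hn', hm]; omega
            omega
          have hCfull : ContrN S Dn (segVerts (u' ++ w) 0 (u' ++ w).length) :=
            hu'w.2 0 (u' ++ w).length (Nat.zero_le _) (le_refl _)
          have hαwl : wordLength S α ≤ 1 := wordLength_letter hαlet
          obtain ⟨g, hgR, hgsplit⟩ := cut_lemma hS hu'w.1 hCfull
            (show 3 ≤ n' by omega) (show n' ≤ (u' ++ w).length by simp [hn']) hαwl hz
          have hvert : verts (u' ++ w) n' = u'.prod := by
            have := verts_append u' w 0
            simpa [verts_zero] using this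
          rw [hvert] at hgsplit
          have hfg := hfun g hgR
          -- bound the length of (u ++ w ++ [α]).prod
          have hZ : (u ++ w ++ [α]).prod = (u.prod * g) * ((u'.prod * g)⁻¹ * z) := by
            rw [hz]
            simp only [List.prod_append, List.prod_singleton]
            group
          have hZle : wordLength S (u ++ w ++ [α]).prod ≤
              wordLength S (u.prod * g) + wordLength S ((u'.prod * g)⁻¹ * z) := by
            rw [hZ]
            exact wordLength_mul_le hS _ _
          have hZgeo : wordLength S (u ++ w ++ [α]).prod = n + m + 1 := by
            have h15 := H.1.2
            rw [List.append_assoc, h15]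
            simp [hn, hm]
            omega
          have hcast : wordLength S (u.prod * g) + n' = wordLength S (u'.prod * g) + n := by
            omega
          omega
      -- contraction of all segments
      have hlenfull : (u' ++ w ++ [α]).length = n' + m + 1 := by simp [hn', hm]; omega
      have hW'eq : u' ++ w ++ [α] = u' ++ (w ++ [α]) := by rw [List.append_assoc]
      have hWeq : u ++ w ++ [α] = u ++ (w ++ [α]) := by rw [List.append_assoc]
      -- case B : segments starting in the common tail
      have caseB : ∀ i j, n' - K ≤ i → i ≤ j → j ≤ n' + m + 1 →
          ContrN S Dn (segVerts (u' ++ w ++ [α]) i j) := by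
        intro i j hiK hij hj
        set t := u'.drop (n' - K) with ht
        have ht' : u.drop (n - K) = t := by rw [ht]; exact htail
        have hu'split : u' = u'.take (n' - K) ++ t := by rw [ht]; simp
        have husplit : u = u.take (n - K) ++ t := by rw [← ht']; simp
        have hlentake' : (u'.take (n' - K)).length = n' - K := by
          simp [hn']
        have hlentake : (u.take (n - K)).length = n - K := by
          simp [hn]
        obtain ⟨a, ha⟩ : ∃ a, i = (n' - K) + a := ⟨i - (n' - K), by omega⟩
        obtain ⟨b, hb⟩ : ∃ b, j = (n' - K) + b := ⟨j - (n' - K), by omega⟩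
        have hshift' : segVerts (u' ++ w ++ [α]) i j =
            (fun g => (u'.take (n' - K)).prod * g) '' segVerts (t ++ (w ++ [α])) a b := by
          have := segVerts_shift (u'.take (n' - K)) t (w ++ [α]) a b
          rw [hlentake'] at this
          rw [hW'eq, ha, hb, ← this, ← hu'split, ← List.append_assoc]
        have hshift : segVerts (u ++ w ++ [α]) ((n - K) + a) ((n - K) + b) =
            (fun g => (u.take (n - K)).prod * g) '' segVerts (t ++ (w ++ [α])) a b := by
          have := segVerts_shift (u.take (n - K)) t (w ++ [α]) a b
          rw [hlentake] at this
          rw [hWeq, ← this, ← husplit, ← List.append_assoc]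
        have hfromu : ContrN S Dn (segVerts (u ++ w ++ [α]) ((n - K) + a) ((n - K) + b)) := by
          rw [hWeq]
          apply H.2
          · omega
          · have hq9 : (u ++ (w ++ [α])).length = n + m + 1 := by simp [hn, hm]; omega
            omega
        rw [hshift] at hfromu
        have hmid : ContrN S Dn (segVerts (t ++ (w ++ [α])) a b) :=
          ContrN_of_smul _ hfromu
        rw [hshift']
        exact ContrN_smul _ hmid
      refine ⟨hgeo, ?_⟩
      intro i j hij hj
      rw [hlenfull] at hj
      rcases le_or_gt j n' with hcase1 | hcase1
      · -- inside u'
        rw [hW'eq, segVerts_append_left u' (w ++ [α]) hcase1]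
        exact hu'.2 i j hij hcase1
      rcases le_or_gt (n' - K) i with hcase2 | hcase2
      · exact caseB i j hcase2 hij hj
      · -- straddling : use the union lemma
        apply union_contr hS hgeo (i₁ := n' - K) (j₁ := n')
          (by omega) (by omega) (by rw [hlenfull]; omega) (by omega)
        · rw [hW'eq, segVerts_append_left u' (w ++ [α]) (le_refl n')]
          exact hu'.2 i n' (by omega) (le_refl n')
        · intro a' ha'1 ha'2
          exact caseB a' j ha'1 (by omega) hj

end Transfer
section Finiteness

variable {G : Type*} [Group G] {S : Finset G}

lemma finite_lettersSet (S : Finset G) : {g : G | IsLetter S g}.Finite := by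
  have he : {g : G | IsLetter S g} = ↑S ∪ (fun g : G => g⁻¹) '' ↑S := by
    ext g
    constructor
    · rintro (h | h)
      · exact Or.inl h
      · exact Or.inr ⟨g⁻¹, h, by group⟩
    · rintro (h | ⟨g₀, hg₀, rfl⟩)
      · exact Or.inl h
      · exact Or.inr (by simpa using hg₀)
  rw [he]
  exact S.finite_toSet.union (S.finite_toSet.image _)

lemma finite_listsLE (S : Finset G) (n : ℕ) :
    {l : List G | (∀ x ∈ l, IsLetter S x) ∧ l.length ≤ n}.Finite := by
  induction n with
  | zero =>
      apply Set.Finite.subset (Set.finite_singleton ([] : List G))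
      rintro l ⟨_, hl⟩
      have h9 : l = [] := List.length_eq_zero_iff.1 (by omega)
      simp [h9]
  | succ n ih =>
      apply Set.Finite.subset (Set.Finite.insert []
        (Set.Finite.image (fun p : G × List G => p.1 :: p.2)
          (Set.Finite.prod (finite_lettersSet S) ih)))
      rintro l ⟨hlet, hlen⟩
      cases l with
      | nil => exact Set.mem_insert _ _
      | cons hd tl =>
          apply Set.mem_insert_of_mem
          refine ⟨(hd, tl), ⟨hlet hd (by simp), fun x hx => hlet x (by simp [hx]), ?_⟩, rfl⟩
          show tl.length ≤ n
          simp only [List.length_cons] at hlen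
          omega

lemma finite_ball (hS : Subgroup.closure (S : Set G) = ⊤) (R : ℕ) :
    {g : G | wordLength S g ≤ R}.Finite := by
  apply Set.Finite.subset (Set.Finite.image List.prod (finite_listsLE S R))
  intro g hg
  have hg' : wordLength S g ≤ R := hg
  obtain ⟨l, h1, h2, h3⟩ := exists_geodesic_list hS g
  exact ⟨l, ⟨h1, by omega⟩, h2⟩

/-- The radius used for the distance-data in the cone-type invariant. -/
def RR (Dn : ℕ) : ℕ := ((Dn+2) + ((Dn+1) * (2*(Dn+2) + Dn) + 2)) + Dn + 2

/-- The cone-type invariant: for short words the word itself, for long words the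
final `6Dn+20` letters together with the relative word-length data on a ball. -/
noncomputable def dataMap (S : Finset G) (Dn : ℕ) (u : List G) :
    List G ⊕ (List G × Set (G × ℤ)) :=
  if u.length < 6 * Dn + 20 then Sum.inl u
  else Sum.inr (u.drop (u.length - (6 * Dn + 20)),
    {x : G × ℤ | wordLength S x.1 ≤ RR Dn ∧
      x.2 = (wordLength S (u.prod * x.1) : ℤ) - u.length})

lemma dataMap_finite_range (hS : Subgroup.closure (S : Set G) = ⊤) (Dn : ℕ) :
    {d | ∃ u : List G, IsGeodesicWord S u ∧ d = dataMap S Dn u}.Finite := by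
  set K := 6 * Dn + 20 with hK
  apply Set.Finite.subset
    (Set.Finite.union
      (Set.Finite.image Sum.inl (finite_listsLE S K))
      (Set.Finite.image Sum.inr
        (Set.Finite.prod (finite_listsLE S K)
          (Set.Finite.finite_subsets
            (Set.Finite.prod (finite_ball hS (RR Dn))
              (Set.finite_Icc (-(RR Dn : ℤ)) (RR Dn : ℤ)))))))
  rintro d ⟨u, hu, rfl⟩
  unfold dataMap
  split_ifs with hshort
  · left
    exact ⟨u, ⟨hu.1, by omega⟩, rfl⟩
  · right
    push_neg at hshort
    refine ⟨_, ⟨⟨?_, ?_⟩, ?_⟩, rfl⟩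
    · intro x hx
      exact hu.1 x (List.mem_of_mem_drop hx)
    · rw [List.length_drop]
      omega
    · rintro ⟨g, z⟩ ⟨hg, hz⟩
      have hz' : z = (wordLength S (u.prod * g) : ℤ) - u.length := hz
      have hg2 : wordLength S g ≤ RR Dn := hg
      have h1 : wordLength S (u.prod * g) ≤ u.length + wordLength S g := by
        have := wordLength_mul_le hS u.prod g
        have h2 : wordLength S u.prod = u.length := hu.2
        omega
      have h2 : u.length ≤ wordLength S (u.prod * g) + wordLength S g := by
        have h3 : wordLength S ((u.prod * g) * g⁻¹) ≤
            wordLength S (u.prod * g) + wordLength S g⁻¹ := wordLength_mul_le hS _ _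
        have h4 : (u.prod * g) * g⁻¹ = u.prod := by group
        rw [h4, wordLength_inv hS, hu.2] at h3
        exact h3
      constructor
      · exact hg2
      · simp only [Set.mem_Icc]
        constructor
        · rw [hz']
          push_cast
          omega
        · rw [hz']
          push_cast
          omega

lemma cone_eq_of_dataMap_eq (hS : Subgroup.closure (S : Set G) = ⊤) {D : ℝ} (hD : 0 ≤ D)
    {u u' : List G} (hu : HDCN S ⌊D⌋₊ u) (hu' : HDCN S ⌊D⌋₊ u')
    (hdata : dataMap S ⌊D⌋₊ u = dataMap S ⌊D⌋₊ u') : cone S D u = cone S D u' := by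
  set Dn := ⌊D⌋₊ with hDn
  unfold dataMap at hdata
  rcases lt_or_ge u.length (6 * Dn + 20) with h1 | h1 <;>
    rcases lt_or_ge u'.length (6 * Dn + 20) with h2 | h2
  · -- both short : equal words
    rw [if_pos h1, if_pos h2, Sum.inl.injEq] at hdata
    rw [hdata]
  · rw [if_pos h1, if_neg (by omega)] at hdata
    exact absurd hdata (by simp)
  · rw [if_neg (by omega), if_pos h2] at hdata
    exact absurd hdata (by simp)
  · -- both long
    rw [if_neg (by omega), if_neg (by omega), Sum.inr.injEq, Prod.mk.injEq] at hdata
    obtain ⟨htail, hF⟩ := hdata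
    have hfun : ∀ g : G, wordLength S g ≤ RR Dn →
        (wordLength S (u.prod * g) : ℤ) - u.length =
          (wordLength S (u'.prod * g) : ℤ) - u'.length := by
      intro g hg
      have hmem : (g, (wordLength S (u.prod * g) : ℤ) - u.length) ∈
          {x : G × ℤ | wordLength S x.1 ≤ RR Dn ∧
            x.2 = (wordLength S (u.prod * x.1) : ℤ) - u.length} := ⟨hg, rfl⟩
      rw [hF] at hmem
      exact hmem.2
    have hfun' : ∀ g : G, wordLength S g ≤ RR Dn →
        (wordLength S (u'.prod * g) : ℤ) - u'.length =
          (wordLength S (u.prod * g) : ℤ) - u.length := fun g hg => (hfun g hg).symm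
    ext w
    simp only [cone, Set.mem_setOf_eq]
    constructor
    · rintro ⟨hlet, hcw⟩
      refine ⟨hlet, ?_⟩
      rw [isContractingWord_iff_HDCN hD] at hcw ⊢
      exact transfer hS hu hu' h1 h2 htail hfun w hcw
    · rintro ⟨hlet, hcw⟩
      refine ⟨hlet, ?_⟩
      rw [isContractingWord_iff_HDCN hD] at hcw ⊢
      exact transfer hS hu' hu h2 h1 htail.symm hfun' w hcw

end Finiteness
/-- there are only finitely many `D`-contracting cone types. -/
theorem finitely_many_cone_types {G : Type} [Group G] (S : Finset G)
    (hS : Subgroup.closure (S : Set G) = ⊤) (D : ℝ) (hD : 0 ≤ D) :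
    {C : Set (List G) | ∃ u : List G, IsGeodesicWord S u ∧ C = cone S D u}.Finite := by
  classical
  set Dn := ⌊D⌋₊ with hDn
  have key : {C : Set (List G) | ∃ u : List G, IsGeodesicWord S u ∧ C = cone S D u} ⊆
      insert ∅ ((fun u => cone S D u) '' {u | HDCN S Dn u}) := by
    rintro C ⟨u, hugeo, rfl⟩
    rcases Set.eq_empty_or_nonempty (cone S D u) with he | ⟨w, hw⟩
    · rw [he]
      exact Set.mem_insert _ _
    · apply Set.mem_insert_of_mem
      refine ⟨u, ?_, rfl⟩
      have h1 : IsContractingWord S D (u ++ w) := hw.2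
      rw [isContractingWord_iff_HDCN hD] at h1
      exact HDCN_prefix hS h1
  have himg : ((fun u => cone S D u) '' {u | HDCN S Dn u}).Finite := by
    set F : (List G ⊕ (List G × Set (G × ℤ))) → Set (List G) :=
      fun d => if h : ∃ u₁, HDCN S Dn u₁ ∧ dataMap S Dn u₁ = d then cone S D h.choose else ∅
      with hF
    apply Set.Finite.subset (Set.Finite.image F (dataMap_finite_range hS Dn))
    rintro C ⟨u, hu, rfl⟩
    refine ⟨dataMap S Dn u, ⟨u, hu.1, rfl⟩, ?_⟩
    have hex : ∃ u₁, HDCN S Dn u₁ ∧ dataMap S Dn u₁ = dataMap S Dn u := ⟨u, hu, rfl⟩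
    rw [hF]
    simp only []
    rw [dif_pos hex]
    exact cone_eq_of_dataMap_eq hS hD hex.choose_spec.1 hu hex.choose_spec.2
  exact (himg.insert ∅).subset key
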